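/- For every numeric term t ∈ T^ω and every parameter assignment σ, the term σ(t) has a unique normal form under the rewrite system R(F̂_ω), and this normal form is a numeral s^β(0̄) for some β ∈ ℕ. -/

import Mathlib

namespace Schematic

/-- Numeric terms `T^ω`: built from `0̄`, parameters (indexed by `ℕ`), the successor `s`, and
defined numeric function symbols `f̂ ∈ F̂_ω` (the symbol type `F`), where `f̂ ∈ F` has arity
`ar f + 1`. -/
inductive NTerm (F : Type) (ar : F → ℕ) : Type where
  | zero : NTerm F ar
  | param : ℕ → NTerm F ar
  | succ : NTerm F ar → NTerm F ar
  | defd : (f : F) → (Fin (ar f + 1) → NTerm F ar) → NTerm F ar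

namespace NTerm

variable {F : Type} {ar : F → ℕ}

/-- The numeral `s^β(0̄)`. -/
def ofNat (F : Type) (ar : F → ℕ) : ℕ → NTerm F ar
  | 0 => zero
  | n + 1 => succ (ofNat F ar n)

/-- Homomorphic substitution of parameters. -/
def subst (σ : ℕ → NTerm F ar) : NTerm F ar → NTerm F ar
  | zero => zero
  | param n => σ n
  | succ t => succ (t.subst σ)
  | defd f ts => defd f fun i => (ts i).subst σ

/-- The parameter `n` occurs in the term. -/
def HasParam (n : ℕ) : NTerm F ar → Prop
  | zero => False
  | param m => m = n
  | succ t => t.HasParam n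
  | defd _ ts => ∃ i, (ts i).HasParam n

/-- The defined symbol `g` occurs in the term. -/
def HasSymb (g : F) : NTerm F ar → Prop
  | zero => False
  | param _ => False
  | succ t => t.HasSymb g
  | defd f ts => f = g ∨ ∃ i, (ts i).HasSymb g

/-- The term contains no defined function symbols (i.e. it belongs to `T^ω₀`). -/
def NoDefd : NTerm F ar → Prop
  | zero => True
  | param _ => True
  | succ t => t.NoDefd
  | defd _ _ => False

/-- The term is a numeral `s^β(0̄)`. -/
def IsNumeral : NTerm F ar → Prop
  | zero => True
  | param _ => False
  | succ t => t.IsNumeral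
  | defd _ _ => False

/-- Evaluation of defined-symbol-free numeric terms under a parameter assignment
(junk value `0` on defined symbols). -/
def eval0 (σ : ℕ → ℕ) : NTerm F ar → ℕ
  | zero => 0
  | param n => σ n
  | succ t => t.eval0 σ + 1
  | defd _ _ => 0

end NTerm

variable {F : Type} {ar : F → ℕ}

/-- The substitution sending parameter `n < k` to `ts n` and fixing all other parameters. -/
def cutSub (k : ℕ) (ts : Fin k → NTerm F ar) : ℕ → NTerm F ar := fun n =>
  if h : n < k then ts ⟨n, h⟩ else NTerm.param n

/-- Like `cutSub` but additionally sending the parameter `k` (the recursion parameter `m`)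
to `u`. -/
def cutSub2 (k : ℕ) (ts : Fin k → NTerm F ar) (u : NTerm F ar) : ℕ → NTerm F ar := fun n =>
  if h : n < k then ts ⟨n, h⟩ else if n = k then u else NTerm.param n

/-- Like `cutSub2` but additionally sending parameter `k + 1` (the placeholder `k` for the
recursive call) to `recc`. -/
def stepSub (k : ℕ) (ts : Fin k → NTerm F ar) (u recc : NTerm F ar) : ℕ → NTerm F ar := fun n =>
  if h : n < k then ts ⟨n, h⟩
  else if n = k then u
  else if n = k + 1 then recc
  else NTerm.param n

/-- Defining equations `D(f̂)` for the numeric defined symbols: for `f̂` of arity `α + 1`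
(`α = ar f̂`), `base f̂ = t_B` uses only the parameters `0,…,α-1` (standing for `n₁,…,n_α`) and
`step f̂ = t_S` uses only the parameters `0,…,α+1`, where parameter `α` stands for `m` and
parameter `α+1` stands for the placeholder `k` of the recursive call
`f̂(n₁,…,n_α,m)`. -/
structure NumDefs (F : Type) (ar : F → ℕ) where
  base : F → NTerm F ar
  step : F → NTerm F ar

/-- Wellformedness of the numeric defining equations with respect to the order `prec` on the
defined symbols: parameter conditions and the condition that all defined symbols occurring in
`t_B, t_S` are `prec`-smaller than `f̂`. -/
structure GoodNumDefs (prec : F → F → Prop) (D : NumDefs F ar) : Prop where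
  base_params : ∀ f n, (D.base f).HasParam n → n < ar f
  step_params : ∀ f n, (D.step f).HasParam n → n < ar f + 2
  base_symbs : ∀ f g, (D.base f).HasSymb g → prec g f
  step_symbs : ∀ f g, (D.step f).HasSymb g → prec g f

end Schematic
namespace Schematic

variable {F : Type} {ar : F → ℕ}

/-- The one-step rewrite relation `→_ω` generated by the rewrite system `R(F̂_ω)`,
obtained by orienting the defining equations from left to right; the rules are applicable
under arbitrary instantiation of the parameters and inside any term context. -/
inductive NStep (D : NumDefs F ar) : NTerm F ar → NTerm F ar → Prop where
  | baseRule (f : F) (ts : Fin (ar f) → NTerm F ar) :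
      NStep D (NTerm.defd f (Fin.snoc ts NTerm.zero)) ((D.base f).subst (cutSub (ar f) ts))
  | stepRule (f : F) (ts : Fin (ar f) → NTerm F ar) (u : NTerm F ar) :
      NStep D (NTerm.defd f (Fin.snoc ts (NTerm.succ u)))
        ((D.step f).subst (stepSub (ar f) ts u (NTerm.defd f (Fin.snoc ts u))))
  | succCong {t t' : NTerm F ar} : NStep D t t' → NStep D (NTerm.succ t) (NTerm.succ t')
  | argCong (f : F) (ts ts' : Fin (ar f + 1) → NTerm F ar) (i : Fin (ar f + 1)) :
      NStep D (ts i) (ts' i) → (∀ j, j ≠ i → ts j = ts' j) →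
      NStep D (NTerm.defd f ts) (NTerm.defd f ts')

end Schematic

namespace Schematic

variable {F : Type} {ar : F → ℕ}

open NTerm

/-! ### Semantic evaluation -/

/-- Evaluation of arbitrary terms given an interpretation `I` of the defined symbols. -/
def evalT (I : ∀ f : F, (Fin (ar f + 1) → ℕ) → ℕ) (σ : ℕ → ℕ) : NTerm F ar → ℕ
  | .zero => 0
  | .param n => σ n
  | .succ t => evalT I σ t + 1
  | .defd f ts => I f fun i => evalT I σ (ts i)

lemma evalT_congI {I I' : ∀ f : F, (Fin (ar f + 1) → ℕ) → ℕ} {σ : ℕ → ℕ} :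
    ∀ {t : NTerm F ar}, (∀ g, t.HasSymb g → I g = I' g) → evalT I σ t = evalT I' σ t
  | .zero, _ => rfl
  | .param _, _ => rfl
  | .succ t, h => by
      simpa [evalT] using evalT_congI (t := t) h
  | .defd f ts, h => by
      simp only [evalT]
      rw [show (fun i => evalT I σ (ts i)) = fun i => evalT I' σ (ts i) from
        funext fun i => evalT_congI fun g hg => h g (Or.inr ⟨i, hg⟩)]
      exact congrFun (h f (Or.inl rfl)) _

lemma evalT_congσ {I : ∀ f : F, (Fin (ar f + 1) → ℕ) → ℕ} {σ σ' : ℕ → ℕ} :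
    ∀ {t : NTerm F ar}, (∀ n, t.HasParam n → σ n = σ' n) → evalT I σ t = evalT I σ' t
  | .zero, _ => rfl
  | .param n, h => h n rfl
  | .succ t, h => by simpa [evalT] using evalT_congσ (t := t) h
  | .defd f ts, h => by
      simp only [evalT]
      rw [show (fun i => evalT I σ (ts i)) = fun i => evalT I σ' (ts i) from
        funext fun i => evalT_congσ fun n hn => h n ⟨i, hn⟩]

lemma evalT_subst {I : ∀ f : F, (Fin (ar f + 1) → ℕ) → ℕ} {σ : ℕ → ℕ}
    {τ : ℕ → NTerm F ar} :
    ∀ t : NTerm F ar, evalT I σ (t.subst τ) = evalT I (fun n => evalT I σ (τ n)) t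
  | .zero => rfl
  | .param _ => rfl
  | .succ t => by simp [subst, evalT, evalT_subst t]
  | .defd f ts => by
      simp only [subst, evalT]
      rw [show (fun i => evalT I σ ((ts i).subst τ)) =
        fun i => evalT I (fun n => evalT I σ (τ n)) (ts i) from
        funext fun i => evalT_subst (ts i)]

lemma evalT_ofNat {I : ∀ f : F, (Fin (ar f + 1) → ℕ) → ℕ} {σ : ℕ → ℕ} (β : ℕ) :
    evalT I σ (ofNat F ar β) = β := by
  induction β with
  | zero => rfl
  | succ β ih => simp [ofNat, evalT, ih]

section Interp

variable (prec : F → F → Prop) (hwf : WellFounded prec) (D : NumDefs F ar)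

open Classical in
/-- Interpretation of the defined symbols, by well-founded recursion on `prec`. -/
noncomputable def interp : ∀ f : F, (Fin (ar f + 1) → ℕ) → ℕ :=
  hwf.fix fun f ih => fun args =>
    Nat.rec
      (evalT (fun g => if h : prec g f then ih g h else fun _ => 0)
        (fun n => if h : n < ar f then args (Fin.castSucc ⟨n, h⟩) else 0) (D.base f))
      (fun m r => evalT (fun g => if h : prec g f then ih g h else fun _ => 0)
        (fun n => if h : n < ar f then args (Fin.castSucc ⟨n, h⟩)
          else if n = ar f then m else if n = ar f + 1 then r else 0) (D.step f))
      (args (Fin.last (ar f)))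

open Classical in
lemma interp_eq (f : F) :
    interp prec hwf D f = fun args =>
      Nat.rec
        (evalT (fun g => if h : prec g f then interp prec hwf D g else fun _ => 0)
          (fun n => if h : n < ar f then args (Fin.castSucc ⟨n, h⟩) else 0) (D.base f))
        (fun m r => evalT (fun g => if h : prec g f then interp prec hwf D g else fun _ => 0)
          (fun n => if h : n < ar f then args (Fin.castSucc ⟨n, h⟩)
            else if n = ar f then m else if n = ar f + 1 then r else 0) (D.step f))
        (args (Fin.last (ar f))) :=
  WellFounded.fix_eq hwf _ f

variable (hD : GoodNumDefs prec D)
include hD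

lemma interp_zero (f : F) (βs : Fin (ar f) → ℕ) :
    interp prec hwf D f (Fin.snoc βs 0) =
      evalT (interp prec hwf D) (fun n => if h : n < ar f then βs ⟨n, h⟩ else 0)
        (D.base f) := by
  conv_lhs => rw [interp_eq prec hwf D f]
  simp only [Fin.snoc_last, Fin.snoc_castSucc]
  exact evalT_congI fun g hg => dif_pos (hD.base_symbs f g hg)

lemma interp_succ (f : F) (βs : Fin (ar f) → ℕ) (m : ℕ) :
    interp prec hwf D f (Fin.snoc βs (m + 1)) =
      evalT (interp prec hwf D)
        (fun n => if h : n < ar f then βs ⟨n, h⟩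
          else if n = ar f then m
          else if n = ar f + 1 then interp prec hwf D f (Fin.snoc βs m) else 0)
        (D.step f) := by
  rw [interp_eq prec hwf D f]
  simp only [Fin.snoc_last, Fin.snoc_castSucc]
  exact evalT_congI fun g hg => dif_pos (hD.step_symbs f g hg)

end Interp

/-! ### Basic term lemmas -/

lemma hasParam_subst {τ : ℕ → NTerm F ar} {n : ℕ} :
    ∀ {t : NTerm F ar}, (t.subst τ).HasParam n → ∃ m, t.HasParam m ∧ (τ m).HasParam n
  | .zero, h => h.elim
  | .param m, h => ⟨m, rfl, h⟩
  | .succ t, h => hasParam_subst (t := t) h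
  | .defd f ts, h => by
      obtain ⟨i, hi⟩ := h
      obtain ⟨m, hm, hτ⟩ := hasParam_subst (t := ts i) hi
      exact ⟨m, ⟨i, hm⟩, hτ⟩

lemma hasSymb_subst {τ : ℕ → NTerm F ar} {g : F} :
    ∀ {t : NTerm F ar}, (t.subst τ).HasSymb g →
      t.HasSymb g ∨ ∃ m, t.HasParam m ∧ (τ m).HasSymb g
  | .zero, h => h.elim
  | .param m, h => Or.inr ⟨m, rfl, h⟩
  | .succ t, h => hasSymb_subst (t := t) h
  | .defd f ts, h => by
      rcases h with h | ⟨i, hi⟩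
      · exact Or.inl (Or.inl h)
      · rcases hasSymb_subst (t := ts i) hi with h' | ⟨m, hm, hτ⟩
        · exact Or.inl (Or.inr ⟨i, h'⟩)
        · exact Or.inr ⟨m, ⟨i, hm⟩, hτ⟩

lemma ofNat_hasParam (β n : ℕ) : ¬ (ofNat F ar β).HasParam n := by
  induction β with
  | zero => exact fun h => h
  | succ β ih => exact ih

lemma ofNat_hasSymb (β : ℕ) (g : F) : ¬ (ofNat F ar β).HasSymb g := by
  induction β with
  | zero => exact fun h => h
  | succ β ih => exact ih

lemma numeral_eq_ofNat {I : ∀ f : F, (Fin (ar f + 1) → ℕ) → ℕ} {σ : ℕ → ℕ} :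
    ∀ {t : NTerm F ar}, t.IsNumeral → t = ofNat F ar (evalT I σ t)
  | .zero, _ => rfl
  | .param _, h => h.elim
  | .succ t, h => by
      have := numeral_eq_ofNat (I := I) (σ := σ) (t := t) h
      simp only [evalT, ofNat]
      exact congrArg NTerm.succ this
  | .defd _ _, h => h.elim

/-! ### Reduction relation lemmas -/

variable {D : NumDefs F ar}

lemma ofNat_nf (D : NumDefs F ar) (β : ℕ) : ¬ ∃ v, NStep D (ofNat F ar β) v := by
  induction β with
  | zero => rintro ⟨v, h⟩; cases h
  | succ β ih =>
      rintro ⟨v, h⟩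
      cases h with
      | succCong h' => exact ih ⟨_, h'⟩

lemma rtg_succ {a b : NTerm F ar} (h : Relation.ReflTransGen (NStep D) a b) :
    Relation.ReflTransGen (NStep D) (NTerm.succ a) (NTerm.succ b) :=
  Relation.ReflTransGen.lift (r := NStep D) (p := NStep D) NTerm.succ (fun _ _ h' => NStep.succCong h') _ _ h

lemma rtg_arg (f : F) (ts : Fin (ar f + 1) → NTerm F ar) (i : Fin (ar f + 1))
    {a b : NTerm F ar} (h : Relation.ReflTransGen (NStep D) a b) :
    Relation.ReflTransGen (NStep D) (NTerm.defd f (Function.update ts i a))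
      (NTerm.defd f (Function.update ts i b)) := by
  induction h with
  | refl => exact Relation.ReflTransGen.refl
  | tail hab hbc ih =>
      refine ih.tail (NStep.argCong f _ _ i ?_ ?_)
      · simpa using hbc
      · intro j hj; simp [Function.update_of_ne hj]

lemma rtg_args (f : F) (ts ts' : Fin (ar f + 1) → NTerm F ar)
    (h : ∀ i, Relation.ReflTransGen (NStep D) (ts i) (ts' i)) :
    Relation.ReflTransGen (NStep D) (NTerm.defd f ts) (NTerm.defd f ts') := by
  have key : ∀ k : ℕ, k ≤ ar f + 1 →
      Relation.ReflTransGen (NStep D) (NTerm.defd f ts)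
        (NTerm.defd f fun i => if i.val < k then ts' i else ts i) := by
    intro k
    induction k with
    | zero =>
        intro _
        simpa using Relation.ReflTransGen.refl
    | succ k ih =>
        intro hk
        have hklt : k < ar f + 1 := hk
        refine (ih (Nat.le_of_lt hklt)).trans ?_
        set i : Fin (ar f + 1) := ⟨k, hklt⟩
        have e1 : (fun j => if j.val < k then ts' j else ts j) =
            Function.update (fun j => if j.val < k then ts' j else ts j) i (ts i) := by
          funext j
          by_cases hj : j = i
          · subst hj; simp [Function.update_self, i]
          · simp [Function.update_of_ne hj]
        have e2 : (fun j => if j.val < k + 1 then ts' j else ts j) =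
            Function.update (fun j => if j.val < k then ts' j else ts j) i (ts' i) := by
          funext j
          by_cases hj : j = i
          · subst hj; simp [Function.update_self, i]
          · have hjk : j.val ≠ k := fun hc => hj (Fin.ext hc)
            have : (j.val < k + 1) = (j.val < k) := by
              by_cases h' : j.val < k
              · simp [h', Nat.lt_succ_of_lt h']
              · simp only [eq_iff_iff]
                constructor
                · intro hlt; exact absurd (Nat.lt_succ_iff_lt_or_eq.mp hlt)
                    (by rintro (h1 | h1); exact h' h1; exact hjk h1)
                · intro hlt; exact Nat.lt_succ_of_lt hlt
            simp [Function.update_of_ne hj, this]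
        rw [e2]
        nth_rewrite 1 [e1]
        exact rtg_arg f _ i (h i)
  have := key (ar f + 1) le_rfl
  simpa [Fin.is_le] using this

lemma rtg_subst {τ τ' : ℕ → NTerm F ar} (h : ∀ n, Relation.ReflTransGen (NStep D) (τ n) (τ' n)) :
    ∀ t : NTerm F ar, Relation.ReflTransGen (NStep D) (t.subst τ) (t.subst τ')
  | .zero => Relation.ReflTransGen.refl
  | .param n => h n
  | .succ t => rtg_succ (rtg_subst h t)
  | .defd f ts => rtg_args f _ _ fun i => rtg_subst h (ts i)

lemma hasParam_snoc {k : ℕ} (ts : Fin k → NTerm F ar) (u : NTerm F ar) (i : Fin k) {n : ℕ}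
    (h : (ts i).HasParam n) : ((Fin.snoc ts u : Fin (k + 1) → NTerm F ar)
      (Fin.castSucc i)).HasParam n := by
  simpa using h

lemma hasParam_snoc_last {k : ℕ} (ts : Fin k → NTerm F ar) (u : NTerm F ar) {n : ℕ}
    (h : u.HasParam n) : ((Fin.snoc ts u : Fin (k + 1) → NTerm F ar)
      (Fin.last k)).HasParam n := by
  simpa using h

/-! ### Invariance of the value under rewriting -/

section Preservation

variable (prec : F → F → Prop) (hwf : WellFounded prec)
variable (hD : GoodNumDefs prec D)
include hD

lemma den_step {a b : NTerm F ar} (h : NStep D a b) (σ : ℕ → ℕ) :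
    evalT (interp prec hwf D) σ a = evalT (interp prec hwf D) σ b := by
  induction h with
  | baseRule f ts =>
      have e1 : (fun i : Fin (ar f + 1) => evalT (interp prec hwf D) σ ((Fin.snoc ts NTerm.zero : Fin (ar f + 1) → NTerm F ar) i)) =
          Fin.snoc (fun i => evalT (interp prec hwf D) σ (ts i)) 0 := by
        funext i
        refine Fin.lastCases ?_ ?_ i <;> simp [Fin.snoc_last, Fin.snoc_castSucc, evalT]
      show interp prec hwf D f _ = _
      rw [e1, interp_zero prec hwf D hD, evalT_subst]
      refine evalT_congσ fun n hn => ?_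
      have hlt : n < ar f := hD.base_params f n hn
      simp [cutSub, hlt]
  | stepRule f ts u =>
      have e1 : (fun i : Fin (ar f + 1) => evalT (interp prec hwf D) σ ((Fin.snoc ts (NTerm.succ u) : Fin (ar f + 1) → NTerm F ar) i)) =
          Fin.snoc (fun i => evalT (interp prec hwf D) σ (ts i))
            (evalT (interp prec hwf D) σ u + 1) := by
        funext i
        refine Fin.lastCases ?_ ?_ i <;> simp [Fin.snoc_last, Fin.snoc_castSucc, evalT]
      show interp prec hwf D f _ = _
      rw [e1, interp_succ prec hwf D hD, evalT_subst]
      refine evalT_congσ fun n hn => ?_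
      have hlt : n < ar f + 2 := hD.step_params f n hn
      by_cases h0 : n < ar f
      · simp [stepSub, h0]
      · rcases Nat.lt_succ_iff_lt_or_eq.mp hlt with h1 | h1
        · rcases Nat.lt_succ_iff_lt_or_eq.mp h1 with h2 | h2
          · exact absurd h2 h0
          · subst h2
            simp [stepSub, h0, evalT]
        · subst h1
          have hne : ¬ (ar f + 1 < ar f) := by omega
          have hne2 : ar f + 1 ≠ ar f := by omega
          simp only [dif_neg h0, if_neg hne2, if_pos rfl, stepSub, dif_neg hne,
            if_neg hne2, if_pos rfl, if_true]
          show _ = interp prec hwf D f _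
          congr 1
          funext i
          refine Fin.lastCases ?_ ?_ i <;> simp [Fin.snoc_last, Fin.snoc_castSucc, evalT]
  | succCong h ih => simp [evalT, ih]
  | argCong f ts ts' i hstep heq ih =>
      simp only [evalT]
      congr 1
      funext j
      by_cases hj : j = i
      · subst hj; exact ih
      · rw [heq j hj]

lemma noParam_step {a b : NTerm F ar} (h : NStep D a b)
    (ha : ∀ n, ¬ a.HasParam n) : ∀ n, ¬ b.HasParam n := by
  induction h with
  | baseRule f ts =>
      intro n hn
      obtain ⟨m, hm, hτ⟩ := hasParam_subst hn
      have hlt : m < ar f := hD.base_params f m hm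
      have : (ts ⟨m, hlt⟩).HasParam n := by simpa [cutSub, hlt] using hτ
      exact ha n ⟨Fin.castSucc ⟨m, hlt⟩, hasParam_snoc ts NTerm.zero ⟨m, hlt⟩ this⟩
  | stepRule f ts u =>
      intro n hn
      obtain ⟨m, hm, hτ⟩ := hasParam_subst hn
      have hlt : m < ar f + 2 := hD.step_params f m hm
      by_cases h0 : m < ar f
      · have : (ts ⟨m, h0⟩).HasParam n := by simpa [stepSub, h0] using hτ
        exact ha n ⟨Fin.castSucc ⟨m, h0⟩, hasParam_snoc ts (NTerm.succ u) ⟨m, h0⟩ this⟩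
      · rcases Nat.lt_succ_iff_lt_or_eq.mp hlt with h1 | h1
        · rcases Nat.lt_succ_iff_lt_or_eq.mp h1 with h2 | h2
          · exact absurd h2 h0
          · subst h2
            have : u.HasParam n := by simpa [stepSub, h0] using hτ
            exact ha n ⟨Fin.last _, hasParam_snoc_last ts (NTerm.succ u) this⟩
        · subst h1
          have hne : ¬ (ar f + 1 < ar f) := by omega
          have hne2 : ar f + 1 ≠ ar f := by omega
          have : (NTerm.defd f (Fin.snoc ts u)).HasParam n := by
            simpa [stepSub, hne, hne2] using hτ
          obtain ⟨i, hi⟩ := this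
          refine Fin.lastCases ?_ ?_ i hi
          · intro hu
            simp only [Fin.snoc_last] at hu
            exact ha n ⟨Fin.last _, hasParam_snoc_last ts (NTerm.succ u) hu⟩
          · intro j hj
            simp only [Fin.snoc_castSucc] at hj
            exact ha n ⟨Fin.castSucc j, hasParam_snoc ts (NTerm.succ u) j hj⟩
  | succCong h ih => exact ih ha
  | argCong f ts ts' i hstep heq ih =>
      intro n hn
      obtain ⟨j, hj⟩ := hn
      by_cases hji : j = i
      · subst hji
        exact ih (fun m hm => ha m ⟨j, hm⟩) n hj
      · rw [← heq j hji] at hj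
        exact ha n ⟨j, hj⟩

lemma nf_numeral :
    ∀ t : NTerm F ar, (∀ n, ¬ t.HasParam n) → (¬ ∃ v, NStep D t v) → t.IsNumeral
  | .zero, _, _ => trivial
  | .param n, hp, _ => absurd rfl (hp n)
  | .succ t, hp, hnf =>
      nf_numeral t hp (fun ⟨v, hv⟩ => hnf ⟨_, NStep.succCong hv⟩)
  | .defd f ts, hp, hnf => by
      exfalso
      by_cases hc : ∀ i, ¬ ∃ v, NStep D (ts i) v
      · have hnum : ∀ i, (ts i).IsNumeral := fun i =>
          nf_numeral (ts i) (fun n hn => hp n ⟨i, hn⟩) (hc i)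
        have hlast := hnum (Fin.last (ar f))
        have hself : Fin.snoc (Fin.init ts) (ts (Fin.last (ar f))) = ts :=
          Fin.snoc_init_self ts
        cases hts : ts (Fin.last (ar f)) with
        | zero =>
            have hts' : ts = Fin.snoc (Fin.init ts) NTerm.zero := by rw [← hts, hself]
            have h2 := NStep.baseRule (D := D) f (Fin.init ts)
            rw [← hts'] at h2
            exact hnf ⟨_, h2⟩
        | param n => rw [hts] at hlast; exact hlast
        | succ u =>
            have hts' : ts = Fin.snoc (Fin.init ts) (NTerm.succ u) := by rw [← hts, hself]
            have h2 := NStep.stepRule (D := D) f (Fin.init ts) u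
            rw [← hts'] at h2
            exact hnf ⟨_, h2⟩
        | defd g us => rw [hts] at hlast; exact hlast
      · push_neg at hc
        obtain ⟨i, v, hv⟩ := hc
        refine hnf ⟨NTerm.defd f (Function.update ts i v), ?_⟩
        refine NStep.argCong f ts _ i ?_ ?_
        · simpa using hv
        · intro j hj; simp [Function.update_of_ne hj]

/-! ### The main reduction lemma -/

lemma main_red (C : F → Prop)
    (hC : ∀ f, C f → ∀ (βs : Fin (ar f) → ℕ) (β : ℕ),
      Relation.ReflTransGen (NStep D)
        (NTerm.defd f (Fin.snoc (fun i => ofNat F ar (βs i)) (ofNat F ar β)))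
        (ofNat F ar (interp prec hwf D f (Fin.snoc βs β)))) :
    ∀ t : NTerm F ar, (∀ n, ¬ t.HasParam n) → (∀ g, t.HasSymb g → C g) →
      Relation.ReflTransGen (NStep D) t
        (ofNat F ar (evalT (interp prec hwf D) (fun _ => 0) t))
  | .zero, _, _ => Relation.ReflTransGen.refl
  | .param n, hp, _ => absurd rfl (hp n)
  | .succ t, hp, hs => rtg_succ (main_red C hC t hp hs)
  | .defd f ts, hp, hs => by
      have ih : ∀ i, Relation.ReflTransGen (NStep D) (ts i)
          (ofNat F ar (evalT (interp prec hwf D) (fun _ => 0) (ts i))) := fun i =>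
        main_red C hC (ts i) (fun n hn => hp n ⟨i, hn⟩) (fun g hg => hs g (Or.inr ⟨i, hg⟩))
      set e : Fin (ar f + 1) → ℕ := fun i => evalT (interp prec hwf D) (fun _ => 0) (ts i)
        with he
      refine (rtg_args f ts (fun i => ofNat F ar (e i)) ih).trans ?_
      have e1 : (fun i => ofNat F ar (e i)) =
          Fin.snoc (fun j => ofNat F ar (e (Fin.castSucc j))) (ofNat F ar (e (Fin.last _))) := by
        funext i
        refine Fin.lastCases ?_ ?_ i <;> simp [Fin.snoc_last, Fin.snoc_castSucc]
      rw [e1]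
      have e2 : Fin.snoc (fun j => e (Fin.castSucc j)) (e (Fin.last (ar f))) = e := by
        funext i
        refine Fin.lastCases ?_ ?_ i <;> simp [Fin.snoc_last, Fin.snoc_castSucc]
      have := hC f (hs f (Or.inl rfl)) (fun j => e (Fin.castSucc j)) (e (Fin.last _))
      rw [show (fun i => ofNat F ar ((fun j => e (Fin.castSucc j)) i)) =
        (fun j => ofNat F ar (e (Fin.castSucc j))) from rfl] at this
      rw [e2] at this
      exact this

lemma reduces : ∀ f : F, ∀ (βs : Fin (ar f) → ℕ) (β : ℕ),
    Relation.ReflTransGen (NStep D)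
      (NTerm.defd f (Fin.snoc (fun i => ofNat F ar (βs i)) (ofNat F ar β)))
      (ofNat F ar (interp prec hwf D f (Fin.snoc βs β))) := by
  intro f
  induction f using hwf.induction with
  | _ f ih =>
  intro βs β
  induction β with
  | zero =>
      refine Relation.ReflTransGen.head (NStep.baseRule f (fun i => ofNat F ar (βs i))) ?_
      have hred := main_red prec hwf hD (fun g => prec g f) (fun g hg => ih g hg)
        ((D.base f).subst (cutSub (ar f) fun i => ofNat F ar (βs i)))
        (fun n hn => by
          obtain ⟨m, hm, hτ⟩ := hasParam_subst hn
          have hlt : m < ar f := hD.base_params f m hm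
          exact ofNat_hasParam _ _ (by simpa [cutSub, hlt] using hτ))
        (fun g hg => by
          rcases hasSymb_subst hg with h' | ⟨m, hm, hτ⟩
          · exact hD.base_symbs f g h'
          · have hlt : m < ar f := hD.base_params f m hm
            exact absurd (by simpa [cutSub, hlt] using hτ) (ofNat_hasSymb _ _))
      have hval : evalT (interp prec hwf D) (fun _ => 0)
          ((D.base f).subst (cutSub (ar f) fun i => ofNat F ar (βs i))) =
          interp prec hwf D f (Fin.snoc βs 0) := by
        rw [evalT_subst, interp_zero prec hwf D hD]
        refine evalT_congσ fun n hn => ?_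
        have hlt : n < ar f := hD.base_params f n hn
        simp [cutSub, hlt, evalT_ofNat]
      rw [hval] at hred
      exact hred
  | succ β ihβ =>
      set nums : Fin (ar f) → NTerm F ar := fun i => ofNat F ar (βs i) with hnums
      set r : ℕ := interp prec hwf D f (Fin.snoc βs β) with hr
      refine Relation.ReflTransGen.head (NStep.stepRule f nums (ofNat F ar β)) ?_
      have hmono : ∀ n, Relation.ReflTransGen (NStep D)
          (stepSub (ar f) nums (ofNat F ar β)
            (NTerm.defd f (Fin.snoc nums (ofNat F ar β))) n)
          (stepSub (ar f) nums (ofNat F ar β) (ofNat F ar r) n) := by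
        intro n
        by_cases h0 : n < ar f
        · simp only [stepSub, dif_pos h0]
          exact Relation.ReflTransGen.refl
        · by_cases h1 : n = ar f
          · simp only [stepSub, dif_neg h0, if_pos h1]
            exact Relation.ReflTransGen.refl
          · by_cases h2 : n = ar f + 1
            · simp only [stepSub, dif_neg h0, if_neg h1, if_pos h2]
              exact ihβ
            · simp only [stepSub, dif_neg h0, if_neg h1, if_neg h2]
              exact Relation.ReflTransGen.refl
      refine (rtg_subst hmono (D.step f)).trans ?_
      have hred := main_red prec hwf hD (fun g => prec g f) (fun g hg => ih g hg)
        ((D.step f).subst (stepSub (ar f) nums (ofNat F ar β) (ofNat F ar r)))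
        (fun n hn => by
          obtain ⟨m, hm, hτ⟩ := hasParam_subst hn
          have hlt : m < ar f + 2 := hD.step_params f m hm
          by_cases h0 : m < ar f
          · exact ofNat_hasParam _ _ (by simpa [stepSub, h0, hnums] using hτ)
          · by_cases h1 : m = ar f
            · exact ofNat_hasParam _ _ (by simpa [stepSub, h0, h1] using hτ)
            · have h2 : m = ar f + 1 := by omega
              exact ofNat_hasParam _ _ (by simpa [stepSub, h0, h1, h2] using hτ))
        (fun g hg => by
          rcases hasSymb_subst hg with h' | ⟨m, hm, hτ⟩
          · exact hD.step_symbs f g h'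
          · have hlt : m < ar f + 2 := hD.step_params f m hm
            by_cases h0 : m < ar f
            · exact absurd (by simpa [stepSub, h0, hnums] using hτ) (ofNat_hasSymb _ _)
            · by_cases h1 : m = ar f
              · exact absurd (by simpa [stepSub, h0, h1] using hτ) (ofNat_hasSymb _ _)
              · have h2 : m = ar f + 1 := by omega
                exact absurd (by simpa [stepSub, h0, h1, h2] using hτ) (ofNat_hasSymb _ _))
      have hval : evalT (interp prec hwf D) (fun _ => 0)
          ((D.step f).subst (stepSub (ar f) nums (ofNat F ar β) (ofNat F ar r))) =
          interp prec hwf D f (Fin.snoc βs (β + 1)) := by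
        rw [evalT_subst, interp_succ prec hwf D hD]
        refine evalT_congσ fun n hn => ?_
        have hlt : n < ar f + 2 := hD.step_params f n hn
        by_cases h0 : n < ar f
        · simp [stepSub, h0, hnums, evalT_ofNat]
        · by_cases h1 : n = ar f
          · simp [stepSub, h0, h1, evalT_ofNat]
          · have h2 : n = ar f + 1 := by omega
            simp [stepSub, h0, h1, h2, evalT_ofNat, hr]
      rw [hval] at hred
      exact hred

end Preservation

end Schematic

open Schematic

/-- For every numeric term `t ∈ T^ω` and every parameter assignment `σ`
(a function from parameters to numerals), the term `σ(t)` has a unique normal form under the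
rewrite system `R(F̂_ω)`, and this normal form is a numeral `s^β(0̄)`. -/
theorem statement1 (F : Type) (ar : F → ℕ) (prec : F → F → Prop)
    (hirr : ∀ f, ¬ prec f f) (htrans : Transitive prec) (hwf : WellFounded prec)
    (D : NumDefs F ar) (hD : GoodNumDefs prec D)
    (t : NTerm F ar) (σ : ℕ → ℕ) :
    ∃ β : ℕ,
      Relation.ReflTransGen (NStep D) (t.subst fun n => NTerm.ofNat F ar (σ n))
        (NTerm.ofNat F ar β) ∧
      (¬ ∃ v, NStep D (NTerm.ofNat F ar β) v) ∧
      ∀ u, Relation.ReflTransGen (NStep D) (t.subst fun n => NTerm.ofNat F ar (σ n)) u →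
        (¬ ∃ v, NStep D u v) → u = NTerm.ofNat F ar β := by
  classical
  set t₀ : NTerm F ar := t.subst fun n => NTerm.ofNat F ar (σ n) with ht₀
  have hnp : ∀ n, ¬ t₀.HasParam n := fun n hn => by
    obtain ⟨m, _, hτ'⟩ := hasParam_subst hn
    exact ofNat_hasParam _ _ hτ'
  refine ⟨evalT (interp prec hwf D) (fun _ => 0) t₀, ?_, ofNat_nf D _, ?_⟩
  · exact main_red prec hwf hD (fun _ => True) (fun f _ => reduces prec hwf hD f) t₀ hnp
      (fun _ _ => trivial)
  · intro u hu hnf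
    have hden : evalT (interp prec hwf D) (fun _ => 0) t₀ =
        evalT (interp prec hwf D) (fun _ => 0) u := by
      clear hnf
      induction hu with
      | refl => rfl
      | tail _ hbc ih => exact ih.trans (den_step prec hwf hD hbc _)
    have hnp' : ∀ n, ¬ u.HasParam n := by
      clear hnf hden
      induction hu with
      | refl => exact hnp
      | tail _ hbc ih => exact noParam_step prec hD hbc ih
    have hnum : u.IsNumeral := nf_numeral prec hD u hnp' hnf
    have := numeral_eq_ofNat (I := interp prec hwf D) (σ := fun _ => 0) hnum
    rw [this, hden]
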